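/- arXiv:2601.21660 — 6 statements merged into one kernel-verified Lean document; each statement's English description precedes it below -/
import Mathlib

section
/- If y₀ ∈ (0,1) satisfies ln(2 - y₀/2) = (3/2)·y₀, then 1 + ln(2 - y₀/2) < 1.5897. -/
theorem stmt_1 (y₀ : ℝ) (hy : y₀ ∈ Set.Ioo (0:ℝ) 1)
    (heq : Real.log (2 - y₀ / 2) = (3 / 2) * y₀) :
    1 + Real.log (2 - y₀ / 2) < 1.5897 := by
  obtain ⟨h0, h1⟩ := hy
  have key : Real.log (2 - (0.393131 : ℝ) / 2) < (3 / 2) * 0.393131 := by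
    rw [Real.log_lt_iff_lt_exp (by norm_num)]
    have h := Real.sum_le_exp_of_nonneg (x := (3 / 2) * 0.393131) (by norm_num) 8
    refine lt_of_lt_of_le ?_ h
    simp only [Finset.sum_range_succ, Finset.sum_range_zero]
    norm_num [Nat.factorial]
  have hc : y₀ < 0.393131 := by
    by_contra h
    push_neg at h
    have hmono : Real.log (2 - y₀ / 2) ≤ Real.log (2 - (0.393131 : ℝ) / 2) :=
      Real.log_le_log (by linarith) (by linarith)
    rw [heq] at hmono
    linarith
  rw [heq]; linarith
end

section
/- The function h(y) = (1/2)·y + 6·(1-y)·(1 - exp(-(1/2)·y)) - ln(2 - 2y) has a unique root y₁ in the interval [0, 1/2), and this root satisfies y₁ > 0.17458. -/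
noncomputable def hf : ℝ → ℝ := fun y =>
  (1 / 2) * y + 6 * (1 - y) * (1 - Real.exp (-(1 / 2) * y)) - Real.log (2 - 2 * y)

lemma hf_hasDerivAt (y : ℝ) (hy : y < 1) :
    HasDerivAt hf (1/2 - 6*(1 - Real.exp (-(1/2)*y)) + 3*(1-y)*Real.exp (-(1/2)*y) + 1/(1-y)) y := by
  have h1 : HasDerivAt (fun y : ℝ => -(1/2 : ℝ) * y) (-(1/2)) y := by
    simpa using (hasDerivAt_id y).const_mul (-(1/2) : ℝ)
  have h2 : HasDerivAt (fun y : ℝ => Real.exp (-(1/2) * y)) (Real.exp (-(1/2)*y) * (-(1/2))) y :=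
    (Real.hasDerivAt_exp _).comp y h1
  have h3 : HasDerivAt (fun y : ℝ => 1 - Real.exp (-(1/2) * y)) (-(Real.exp (-(1/2)*y) * (-(1/2)))) y := by
    simpa [Pi.sub_def] using (hasDerivAt_const y (1:ℝ)).sub h2
  have h4 : HasDerivAt (fun y : ℝ => 6 * (1 - y)) (-6 : ℝ) y := by
    simpa using ((hasDerivAt_const y (1:ℝ)).sub (hasDerivAt_id y)).const_mul (6:ℝ)
  have h5 := h4.mul h3
  have h6 : HasDerivAt (fun y : ℝ => (1/2 : ℝ) * y) (1/2) y := by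
    simpa using (hasDerivAt_id y).const_mul (1/2 : ℝ)
  have h7 : HasDerivAt (fun y : ℝ => 2 - 2 * y) (-2 : ℝ) y := by
    simpa [Pi.sub_def] using (hasDerivAt_const y (2:ℝ)).sub ((hasDerivAt_id y).const_mul (2:ℝ))
  have h8 : (2 - 2 * y) ≠ 0 := by linarith
  have h9 := (Real.hasDerivAt_log h8).comp y h7
  have h10 := (h6.add h5).sub h9
  have h12 : HasDerivAt hf _ y := h10
  convert h12 using 1
  have h11 : (1 - y) ≠ 0 := by linarith
  field_simp
  ring

lemma one_sub_half_le_exp (x : ℝ) : 1 - (1/2)*x ≤ Real.exp (-(1/2)*x) := by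
  have := Real.add_one_le_exp (-(1/2)*x)
  linarith

lemma hf_mono : StrictMonoOn hf (Set.Ico (0:ℝ) (1/2)) := by
  apply strictMonoOn_of_deriv_pos (convex_Ico _ _)
  · apply ContinuousOn.sub
    · fun_prop
    · apply ContinuousOn.log (by fun_prop)
      intro x hx
      simp only [Set.mem_Ico] at hx
      nlinarith [hx.1, hx.2]
  · intro x hx
    rw [interior_Ico] at hx
    obtain ⟨hx0, hx1⟩ := hx
    rw [(hf_hasDerivAt x (by linarith)).deriv]
    have he := one_sub_half_le_exp x
    have h1y : (1:ℝ) ≤ 1/(1-x) := by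
      rw [le_div_iff₀ (by linarith)]; linarith
    nlinarith [he, h1y, sq_nonneg x]

-- exp(-0.08729) ≥ 0.91641128
lemma exp_lb : (0.91641128 : ℝ) ≤ Real.exp (-0.08729) := by
  have habs : |(-0.08729 : ℝ)| = 0.08729 := by
    rw [abs_of_neg] <;> norm_num
  have h := Real.exp_bound (x := -0.08729) (by rw [habs]; norm_num) (n := 5) (by norm_num)
  rw [abs_le, habs] at h
  have h1 := h.1
  rw [Finset.sum_range_succ, Finset.sum_range_succ, Finset.sum_range_succ,
    Finset.sum_range_succ, Finset.sum_range_succ, Finset.sum_range_zero] at h1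
  norm_num [Nat.factorial] at h1 ⊢
  linarith

-- exp(1/2) < 1.6487213
lemma exp_half_ub : Real.exp (1/2) < 1.6487213 := by
  have h1 : Real.exp (1/2) * Real.exp (1/2) = Real.exp 1 := by
    rw [← Real.exp_add]; norm_num
  have h2 := Real.exp_one_lt_d9
  have h3 := Real.exp_pos (1/2 : ℝ)
  nlinarith

-- exp(0.50127) < 1.65084
lemma exp_c_ub : Real.exp (0.50127) < 1.65084 := by
  have h1 : Real.exp (0.50127 : ℝ) = Real.exp (1/2) * Real.exp (0.00127) := by
    rw [← Real.exp_add]; norm_num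
  have h2 : Real.exp (0.00127 : ℝ) ≤ 1 / (1 - 0.00127) :=
    Real.exp_bound_div_one_sub_of_interval (by norm_num) (by norm_num)
  have h3 := exp_half_ub
  have h4 := Real.exp_pos (0.00127 : ℝ)
  rw [h1]
  nlinarith

-- log(1.65084) > 0.50127
lemma log_lb : (0.50127 : ℝ) < Real.log 1.65084 :=
  (Real.lt_log_iff_exp_lt (by norm_num)).mpr exp_c_ub

lemma hf_neg_at_a : hf 0.17458 < 0 := by
  unfold hf
  have h1 : (-(1/2) * 0.17458 : ℝ) = -0.08729 := by norm_num
  rw [h1]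
  have h2 : (2 - 2 * 0.17458 : ℝ) = 1.65084 := by norm_num
  rw [h2]
  have h3 := exp_lb
  have h4 := log_lb
  nlinarith

-- exp(-0.2) ≤ 0.83
lemma exp_ub_02 : Real.exp (-0.2) ≤ 0.83 := by
  have habs : |(-0.2 : ℝ)| = 0.2 := by
    rw [abs_of_neg] <;> norm_num
  have h := Real.exp_bound (x := -0.2) (by rw [habs]; norm_num) (n := 3) (by norm_num)
  rw [abs_le, habs] at h
  have h1 := h.2
  rw [Finset.sum_range_succ, Finset.sum_range_succ, Finset.sum_range_succ,
    Finset.sum_range_zero] at h1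
  norm_num [Nat.factorial] at h1 ⊢
  linarith

lemma hf_pos_at_b : 0 < hf 0.4 := by
  unfold hf
  have h1 : (-(1/2) * 0.4 : ℝ) = -0.2 := by norm_num
  rw [h1]
  have h2 : (2 - 2 * 0.4 : ℝ) = 1.2 := by norm_num
  rw [h2]
  have h3 := exp_ub_02
  have h4 : Real.log 1.2 ≤ 1.2 - 1 := Real.log_le_sub_one_of_pos (by norm_num)
  nlinarith

theorem stmt_4 :
    ∃ y₁ : ℝ, y₁ ∈ Set.Ico (0:ℝ) (1 / 2) ∧
      (1 / 2) * y₁ + 6 * (1 - y₁) * (1 - Real.exp (-(1 / 2) * y₁))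
        - Real.log (2 - 2 * y₁) = 0 ∧
      y₁ > 0.17458 ∧
      ∀ y ∈ Set.Ico (0:ℝ) (1 / 2),
        (1 / 2) * y + 6 * (1 - y) * (1 - Real.exp (-(1 / 2) * y))
          - Real.log (2 - 2 * y) = 0 → y = y₁ := by
  have hcont : ContinuousOn hf (Set.Icc (0.17458 : ℝ) 0.4) := by
    apply ContinuousOn.sub
    · fun_prop
    · apply ContinuousOn.log (by fun_prop)
      intro x hx
      simp only [Set.mem_Icc] at hx
      nlinarith [hx.1, hx.2]
  have hIVT := intermediate_value_Icc (by norm_num : (0.17458:ℝ) ≤ 0.4) hcont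
  have h0mem : (0:ℝ) ∈ Set.Icc (hf 0.17458) (hf 0.4) :=
    ⟨hf_neg_at_a.le, hf_pos_at_b.le⟩
  obtain ⟨y₁, hy₁mem, hy₁0⟩ := hIVT h0mem
  simp only [Set.mem_Icc] at hy₁mem
  have hy₁Ico : y₁ ∈ Set.Ico (0:ℝ) (1/2) := by
    constructor
    · linarith [hy₁mem.1]
    · linarith [hy₁mem.2]
  have hy₁gt : y₁ > 0.17458 := by
    rcases eq_or_lt_of_le hy₁mem.1 with h | h
    · exfalso
      rw [← h] at hy₁0
      exact absurd hy₁0 (ne_of_lt hf_neg_at_a)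
    · exact h
  refine ⟨y₁, hy₁Ico, hy₁0, hy₁gt, ?_⟩
  intro y hy hyeq
  have h1 : hf y = 0 := hyeq
  exact hf_mono.injOn hy hy₁Ico (by rw [h1, hy₁0])
end

section
/- If y₁ ∈ (0, 1/2) satisfies (1/2)·y₁ + 6·(1-y₁)·(1 - exp(-(1/2)·y₁)) = ln(2 - 2y₁), then 1 + y₁ + ln(2 - 2y₁) < 1.6759. -/
set_option maxHeartbeats 1000000

theorem stmt_5 (y₁ : ℝ) (hy : y₁ ∈ Set.Ioo (0:ℝ) (1 / 2))
    (heq : (1 / 2) * y₁ + 6 * (1 - y₁) * (1 - Real.exp (-(1 / 2) * y₁))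
      = Real.log (2 - 2 * y₁)) :
    1 + y₁ + Real.log (2 - 2 * y₁) < 1.6759 := by
  obtain ⟨hy0, hy2⟩ := hy
  have hpos : (0:ℝ) < 2 - 2 * y₁ := by linarith
  -- Step 1: y₁ > 0.17455
  have ha : (0.17455:ℝ) < y₁ := by
    by_contra hcon
    push_neg at hcon
    have hx : |(-(1/2) * y₁)| ≤ 1 := by
      rw [abs_le]; constructor <;> nlinarith
    have hb := Real.exp_bound hx (n := 5) (by norm_num)
    have habs : |(-(1/2) * y₁)| = (1/2) * y₁ := by
      rw [abs_of_nonpos (by nlinarith)]; ring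
    rw [habs] at hb
    have hsum : (∑ m ∈ Finset.range 5, (-(1/2) * y₁) ^ m / m.factorial)
        = 1 + (-(1/2)*y₁) + (-(1/2)*y₁)^2/2 + (-(1/2)*y₁)^3/6 + (-(1/2)*y₁)^4/24 := by
      simp [Finset.sum_range_succ, Nat.factorial]
    rw [hsum] at hb
    have hE : Real.exp (-(1/2) * y₁)
        ≥ 1 + (-(1/2)*y₁) + (-(1/2)*y₁)^2/2 + (-(1/2)*y₁)^3/6 + (-(1/2)*y₁)^4/24
          - ((1/2)*y₁)^5 * (6 / (120 * 5)) := by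
      have h1 := (abs_le.mp hb).1
      norm_num [Nat.factorial] at h1
      rw [show (-(1/2 * y₁):ℝ) = -(1/2) * y₁ from by ring] at h1
      nlinarith [h1]
    have hR : (1/2) * y₁ + 6 * (1 - y₁) * (1 - Real.exp (-(1/2) * y₁)) ≤ 0.50125 := by
      have h1y : (0:ℝ) ≤ 1 - y₁ := by linarith
      have key : (1 - y₁) * (Real.exp (-(1/2) * y₁)
          - (1 + (-(1/2)*y₁) + (-(1/2)*y₁)^2/2 + (-(1/2)*y₁)^3/6 + (-(1/2)*y₁)^4/24
            - ((1/2)*y₁)^5 * (6 / (120 * 5)))) ≥ 0 :=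
        mul_nonneg h1y (by linarith [hE])
      nlinarith [key, mul_nonneg (mul_nonneg hy0.le hy0.le) hy0.le,
        mul_nonneg (sub_nonneg.mpr hcon) hy0.le,
        mul_nonneg (mul_nonneg (sub_nonneg.mpr hcon) hy0.le) hy0.le,
        mul_nonneg (mul_nonneg (mul_nonneg (sub_nonneg.mpr hcon) hy0.le) hy0.le) hy0.le,
        mul_nonneg (mul_nonneg (mul_nonneg (mul_nonneg (sub_nonneg.mpr hcon) hy0.le) hy0.le) hy0.le) hy0.le]
    have h2 : Real.exp ((1/2) * y₁ + 6 * (1 - y₁) * (1 - Real.exp (-(1/2) * y₁)))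
        = 2 - 2 * y₁ := by
      rw [heq, Real.exp_log hpos]
    have h3 : 2 - 2 * y₁ ≤ Real.exp 0.50125 := by
      rw [← h2]; exact Real.exp_le_exp.2 hR
    have h4 : Real.exp (0.50125:ℝ) < 1.6509 := by
      have hub := Real.exp_bound' (x := (0.50125:ℝ)) (by norm_num) (by norm_num)
        (n := 8) (by norm_num)
      have hsum8 : (∑ m ∈ Finset.range 8, (0.50125:ℝ) ^ m / m.factorial)
          + (0.50125:ℝ) ^ 8 * (8 + 1) / (Nat.factorial 8 * 8) < 1.6509 := by
        simp [Finset.sum_range_succ, Nat.factorial]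
        norm_num
      linarith
    linarith
  -- Step 2: numeric bound on log 1.6509
  have hlog2 : Real.log 1.6509 < 0.501349 := by
    have h5 : (1.6509:ℝ) < Real.exp 0.501349 := by
      have hlb := Real.sum_le_exp_of_nonneg (x := (0.501349:ℝ)) (by norm_num) 8
      have hsum8 : (1.6509:ℝ) < ∑ m ∈ Finset.range 8, (0.501349:ℝ) ^ m / m.factorial := by
        simp [Finset.sum_range_succ, Nat.factorial]
        norm_num
      linarith
    calc Real.log 1.6509 < Real.log (Real.exp 0.501349) :=
          Real.log_lt_log (by norm_num) h5
      _ = 0.501349 := Real.log_exp _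
  -- Step 3: log(2-2y₁) ≤ log 1.6509 - (y₁ - 0.17455)
  have hmono : Real.log (2 - 2 * y₁) ≤ Real.log 1.6509 - (y₁ - 0.17455) := by
    have h6 := Real.log_le_sub_one_of_pos (x := (2 - 2 * y₁) / 1.6509) (by positivity)
    rw [Real.log_div (by linarith) (by norm_num)] at h6
    have : (2 - 2 * y₁) / 1.6509 - 1 ≤ -(y₁ - 0.17455) := by
      rw [div_sub_one (by norm_num)]
      rw [div_le_iff₀ (by norm_num)]
      nlinarith
    linarith
  linarith
end

section
/- For all y ∈ [0,1] and ε ∈ [0,1), the unique root y₀(ε) ∈ [0,1] of the equation ln((1−ε)·(2 − y/2)) = (3/2)·(1−ε)·y exists whenever (1−ε)·(3/2) > ln(2(1−ε)) and ln((3/2)(1−ε)) ≥ 0; in particular, for ε = 0.000335 the root satisfies y₀(ε) > 0.39305. -/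
open Real Set

private lemma g_anti {ε : ℝ} (hε : ε < 1) :
    StrictAntiOn (fun y : ℝ => Real.log ((1 - ε) * (2 - y / 2)) - (3 / 2) * (1 - ε) * y)
      (Set.Icc (0:ℝ) 1) := by
  intro y₁ h₁ y₂ h₂ hlt
  have hε' : 0 < 1 - ε := by linarith
  have hpos : 0 < (1 - ε) * (2 - y₂ / 2) := by
    have : y₂ ≤ 1 := h₂.2
    nlinarith
  have hlog : Real.log ((1 - ε) * (2 - y₂ / 2)) < Real.log ((1 - ε) * (2 - y₁ / 2)) := by
    apply Real.log_lt_log hpos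
    nlinarith
  have : (3 / 2) * (1 - ε) * y₁ < (3 / 2) * (1 - ε) * y₂ := by nlinarith
  simp only
  linarith

private lemma g_cont {ε : ℝ} (hε : ε < 1) :
    ContinuousOn (fun y : ℝ => Real.log ((1 - ε) * (2 - y / 2)) - (3 / 2) * (1 - ε) * y)
      (Set.Icc (0:ℝ) 1) := by
  apply ContinuousOn.sub
  · apply ContinuousOn.log
    · fun_prop
    · intro x hx
      have : x ≤ 1 := hx.2
      have hε' : 0 < 1 - ε := by linarith
      nlinarith
  · fun_prop

private lemma key_num :
    Real.log ((1 - 0.000335) * (2 - (0.39305:ℝ) / 2)) - (3 / 2) * (1 - 0.000335) * 0.39305 > 0 := by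
  have ha : ((1 - 0.000335) * (2 - (0.39305:ℝ) / 2)) = 14422966687/8000000000 := by norm_num
  have hc : ((3:ℝ) / 2) * (1 - 0.000335) * 0.39305 = 4715019939/8000000000 := by norm_num
  rw [ha, hc, gt_iff_lt, sub_pos, Real.lt_log_iff_exp_lt (by norm_num)]
  have h := Real.exp_bound' (x := (4715019939:ℝ)/8000000000) (by norm_num) (by norm_num)
    (n := 13) (by norm_num)
  refine lt_of_le_of_lt h ?_
  rw [show (13:ℕ) = 12 + 1 by rfl]
  simp only [Finset.sum_range_succ, Finset.sum_range_zero, Nat.factorial]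
  norm_num

theorem stmt_11 :
    (∀ ε : ℝ, ε ∈ Set.Ico (0:ℝ) 1 →
      (1 - ε) * (3 / 2) > Real.log (2 * (1 - ε)) →
      Real.log ((3 / 2) * (1 - ε)) ≥ 0 →
      ∃! y : ℝ, y ∈ Set.Icc (0:ℝ) 1 ∧
        Real.log ((1 - ε) * (2 - y / 2)) = (3 / 2) * (1 - ε) * y) ∧
    (∀ y : ℝ, y ∈ Set.Icc (0:ℝ) 1 →
      Real.log ((1 - 0.000335) * (2 - y / 2)) = (3 / 2) * (1 - 0.000335) * y →
      y > 0.39305) := by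
  constructor
  · intro ε hε h1 h2
    obtain ⟨hε0, hε1⟩ := hε
    have hε' : (0:ℝ) < 1 - ε := by linarith
    set g : ℝ → ℝ := fun y => Real.log ((1 - ε) * (2 - y / 2)) - (3 / 2) * (1 - ε) * y with hg
    have hg0 : 0 ≤ g 0 := by
      have : g 0 = Real.log (2 * (1 - ε)) := by
        simp only [hg]
        ring_nf
      rw [this]
      refine le_trans h2 ?_
      apply Real.log_le_log (by nlinarith)
      nlinarith
    have hg1 : g 1 ≤ 0 := by
      have : g 1 = Real.log ((3/2) * (1 - ε)) - (3 / 2) * (1 - ε) := by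
        simp only [hg]
        ring_nf
      rw [this]
      have h3 : Real.log ((3/2) * (1-ε)) ≤ Real.log (2 * (1-ε)) := by
        apply Real.log_le_log (by nlinarith)
        nlinarith
      linarith
    have hmem : (0:ℝ) ∈ Set.Icc (g 1) (g 0) := ⟨hg1, hg0⟩
    obtain ⟨y, hy, hgy⟩ := intermediate_value_Icc' (by norm_num : (0:ℝ) ≤ 1) (g_cont hε1) hmem
    refine ⟨y, ⟨hy, by simpa [hg, sub_eq_zero] using hgy⟩, ?_⟩
    rintro z ⟨hz, hzeq⟩
    have hgz : g z = 0 := by simp [hg, hzeq]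
    have hgy0 : g y = 0 := hgy
    exact (g_anti hε1).injOn hz hy (hgz.trans hgy0.symm)
  · intro y hy heq
    by_contra hle
    push_neg at hle
    have h39 : (0.39305:ℝ) ∈ Set.Icc (0:ℝ) 1 := by norm_num
    have hε1 : (0.000335:ℝ) < 1 := by norm_num
    set g : ℝ → ℝ := fun y => Real.log ((1 - 0.000335) * (2 - y / 2)) -
      (3 / 2) * (1 - 0.000335) * y with hg
    have hgy : g y = 0 := by simp [hg, heq]
    have hkey : g 0.39305 > 0 := key_num
    simp only [hg] at hgy hkey
    rcases lt_or_eq_of_le hle with h | h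
    · have := g_anti hε1 hy h39 h
      simp only at this
      linarith
    · rw [h] at hgy
      linarith
end

section
/- With ε = 0.000335 and y₀(ε) the unique root in (0,1) of ln((1−ε)(2 − y/2)) = (3/2)(1−ε)·y, it holds that 2.5 + ln((1−ε)·(2 − y₀(ε)/2)) < 3.0894. -/
lemma aux_logA_gt : (122/207 : ℝ) < Real.log (9014379171/5000000000 : ℝ) := by
  have hX : (0:ℝ) < 9014379171/5000000000 := by norm_num
  have h1 : Real.exp 122 < (9014379171/5000000000 : ℝ) ^ (207:ℕ) := by
    calc Real.exp 122 = (Real.exp 1) ^ (122:ℕ) := by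
          rw [← Real.exp_nat_mul]; norm_num
    _ < (2.7182818286 : ℝ) ^ (122:ℕ) :=
          pow_lt_pow_left₀ Real.exp_one_lt_d9 (le_of_lt (Real.exp_pos 1)) (by norm_num)
    _ < (9014379171/5000000000 : ℝ) ^ (207:ℕ) := by norm_num
  have h2 : (9014379171/5000000000 : ℝ) ^ (207:ℕ)
      = Real.exp ((207:ℕ) * Real.log (9014379171/5000000000 : ℝ)) := by
    rw [Real.exp_nat_mul, Real.exp_log hX]
  rw [h2] at h1
  have := Real.exp_lt_exp.mp h1
  push_cast at this
  linarith

lemma aux_logA_lt : Real.log (9014379171/5000000000 : ℝ) < 211/358 := by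
  have hX : (0:ℝ) < 9014379171/5000000000 := by norm_num
  have h1 : (9014379171/5000000000 : ℝ) ^ (358:ℕ) < Real.exp 211 := by
    calc (9014379171/5000000000 : ℝ) ^ (358:ℕ) < (2.7182818283 : ℝ) ^ (211:ℕ) := by rw [show (358:ℕ) = 179*2 from rfl, pow_mul]; norm_num
    _ < (Real.exp 1) ^ (211:ℕ) :=
          pow_lt_pow_left₀ Real.exp_one_gt_d9 (by norm_num) (by norm_num)
    _ = Real.exp 211 := by rw [← Real.exp_nat_mul]; norm_num
  have h2 : (9014379171/5000000000 : ℝ) ^ (358:ℕ)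
      = Real.exp ((358:ℕ) * Real.log (9014379171/5000000000 : ℝ)) := by
    rw [Real.exp_nat_mul, Real.exp_log hX]
  rw [h2] at h1
  have := Real.exp_lt_exp.mp h1
  push_cast at this
  linarith

theorem stmt_12 (ε y₀ : ℝ) (hε : ε = 0.000335) (hy : y₀ ∈ Set.Ioo (0:ℝ) 1)
    (heq : Real.log ((1 - ε) * (2 - y₀ / 2)) = (3 / 2) * (1 - ε) * y₀) :
    2.5 + Real.log ((1 - ε) * (2 - y₀ / 2)) < 3.0894 := by
  subst hε
  obtain ⟨hy1, hy2⟩ := hy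
  have hpos : (0:ℝ) < (1 - 0.000335) * (2 - y₀ / 2) := by nlinarith
  have hAeq : ((1:ℝ) - 0.000335) * (2 - 0.39304 / 2) = 9014379171/5000000000 := by norm_num
  -- Step B : y₀ > 0.39304
  have hay : (0.39304 : ℝ) < y₀ := by
    by_contra h
    push_neg at h
    have hle : Real.log (9014379171/5000000000 : ℝ)
        ≤ Real.log ((1 - 0.000335) * (2 - y₀ / 2)) := by
      rw [← hAeq]
      apply Real.log_le_log (by norm_num)
      nlinarith
    have h1 := aux_logA_gt
    have h2 : (3 / 2 : ℝ) * (1 - 0.000335) * y₀ ≤ (3 / 2) * (1 - 0.000335) * 0.39304 := by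
      nlinarith
    rw [heq] at hle
    nlinarith
  -- Step C : log arg < log A
  have hlt : Real.log ((1 - 0.000335) * (2 - y₀ / 2))
      < Real.log (9014379171/5000000000 : ℝ) := by
    rw [← hAeq]
    apply Real.log_lt_log hpos
    nlinarith
  have h3 := aux_logA_lt
  linarith
end

section
/- Let y₁ ∈ (0,1/2) be the unique root of (1/2)y + 6(1−y)(1 − e^{−y/2}) = ln(2−2y), and set y₂ = 4(1−y₁)(1 − e^{−y₁/2}). Then for all pairs (a, b) with a, b ≥ 0 and a + b ≤ 1, min{(3/2)(a+b), (3/2)a + ln(2 − 2a − b/2), a + ln(2 − 2a)} ≤ y₁ + ln(2 − 2y₁), provided 2 − 2a − b/2 > 0 and 2 − 2a > 0. -/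
set_option maxHeartbeats 1000000 in
theorem stmt_15 (y₁ : ℝ) (hy : y₁ ∈ Set.Ioo (0:ℝ) (1 / 2))
    (heq : (1 / 2) * y₁ + 6 * (1 - y₁) * (1 - Real.exp (-y₁ / 2))
      = Real.log (2 - 2 * y₁))
    (huniq : ∀ y ∈ Set.Ioo (0:ℝ) (1 / 2),
      (1 / 2) * y + 6 * (1 - y) * (1 - Real.exp (-y / 2)) = Real.log (2 - 2 * y)
        → y = y₁)
    (y₂ : ℝ) (hdef : y₂ = 4 * (1 - y₁) * (1 - Real.exp (-y₁ / 2))) :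
    ∀ a b : ℝ, 0 ≤ a → 0 ≤ b → a + b ≤ 1 →
      0 < 2 - 2 * a - b / 2 → 0 < 2 - 2 * a →
      min (min ((3 / 2) * (a + b)) ((3 / 2) * a + Real.log (2 - 2 * a - b / 2)))
          (a + Real.log (2 - 2 * a))
        ≤ y₁ + Real.log (2 - 2 * y₁) := by
  obtain ⟨hy0, hy12⟩ := hy
  set E : ℝ := Real.exp (-y₁ / 2) with hE
  have hEpos : 0 < E := Real.exp_pos _
  have hEle : 1 - y₁ / 2 ≤ E := by
    have := Real.add_one_le_exp (-y₁ / 2)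
    linarith
  -- y₁ ≤ 3/10
  have hy310 : y₁ ≤ 3 / 10 := by
    by_contra hcon
    push_neg at hcon
    have h2y : (0:ℝ) < 2 - 2 * y₁ := by linarith
    have hlog : Real.log (2 - 2 * y₁) ≤ 1 - 2 * y₁ :=
      by have := Real.log_le_sub_one_of_pos h2y; linarith
    have hexp : 1 + y₁ / 2 ≤ Real.exp (y₁ / 2) := by
      have := Real.add_one_le_exp (y₁ / 2); linarith
    have hmul : (1 + y₁ / 2) * E ≤ 1 := by
      have : Real.exp (y₁ / 2) * E = 1 := by
        rw [hE, ← Real.exp_add, show y₁ / 2 + -y₁ / 2 = 0 by ring, Real.exp_zero]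
      nlinarith [Real.exp_pos (y₁ / 2)]
    nlinarith [heq, hlog, hmul, hEpos]
  -- c ≥ 1
  set c : ℝ := (2 - 2 * y₁) * E with hc
  have h2ypos : (0:ℝ) < 2 - 2 * y₁ := by linarith
  have hc1 : 1 ≤ c := by
    rw [hc]
    nlinarith [mul_le_mul_of_nonneg_left hEle (le_of_lt h2ypos)]
  have hlogc : Real.log c = Real.log (2 - 2 * y₁) - y₁ / 2 := by
    rw [hc, Real.log_mul (ne_of_gt h2ypos) (ne_of_gt hEpos), hE, Real.log_exp]
    ring
  intro a b ha hb hab h1 h2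
  set M : ℝ := y₁ + Real.log (2 - 2 * y₁) with hM
  by_cases hca : y₁ ≤ a
  · refine le_trans (min_le_right _ _) ?_
    have h2y : (0:ℝ) < 2 - 2 * y₁ := by linarith
    have hratio : Real.log ((2 - 2 * a) / (2 - 2 * y₁)) ≤ (2 - 2 * a) / (2 - 2 * y₁) - 1 :=
      Real.log_le_sub_one_of_pos (by positivity)
    rw [Real.log_div (by linarith) (by linarith)] at hratio
    have hfrac : (2 - 2 * a) / (2 - 2 * y₁) - 1 = (2 * y₁ - 2 * a) / (2 - 2 * y₁) := by
      rw [div_sub_one (ne_of_gt h2y)]; ring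
    rw [hfrac] at hratio
    have : (2 * y₁ - 2 * a) / (2 - 2 * y₁) ≤ y₁ - a := by
      rw [div_le_iff₀ h2y]
      nlinarith
    linarith
  · push_neg at hca
    by_cases hd : (3 / 2) * (a + b) ≤ M
    · exact le_trans (min_le_left _ _) (le_trans (min_le_left _ _) hd)
    · push_neg at hd
      refine le_trans (min_le_left _ _) (le_trans (min_le_right _ _) ?_)
      set t : ℝ := (3 / 2) * (y₁ - a) with ht
      have htpos : 0 < t := by rw [ht]; linarith
      -- M = (3/2) y₁ + 6 (1-y₁)(1-E)
      have hMeq : M = (3 / 2) * y₁ + 6 * (1 - y₁) * (1 - E) := by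
        rw [hM, ← heq]; ring
      have harg : 2 - 2 * a - b / 2 ≤ c + t := by
        have hbd : M / 3 - a / 2 ≤ b / 2 := by linarith
        have hexpand : 6 * (1 - y₁) * (1 - E) = 3 * (2 - 2 * y₁) - 3 * ((2 - 2 * y₁) * E) := by
          ring
        linarith [hMeq, hc, ht]
      have hctpos : 0 < c + t := by linarith
      have hle1 : Real.log (2 - 2 * a - b / 2) ≤ Real.log (c + t) :=
        Real.log_le_log h1 harg
      have hle2 : Real.log (c + t) ≤ Real.log c + t := by
        have hr : Real.log ((c + t) / c) ≤ (c + t) / c - 1 :=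
          Real.log_le_sub_one_of_pos (by positivity)
        rw [Real.log_div (ne_of_gt hctpos) (by linarith)] at hr
        have : (c + t) / c - 1 = t / c := by field_simp; ring
        rw [this] at hr
        have : t / c ≤ t := by
          rw [div_le_iff₀ (by linarith)]
          nlinarith
        linarith
      have : (3 / 2) * a + (Real.log c + t) = M := by
        rw [hlogc, hM, ht]; ring
      linarith
end
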